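/- Let A be a proper symmetric 3×3 advantage matrix with a₁₂ = a₂₁ = a, a₁₃ = a₃₁ = b, a₂₃ = a₃₂ = c, where a, b, c > 0, and let F : S₃ → S₃ be the associated Variational Learning dynamics. Then the point p = (c/(a+b+c), b/(a+b+c), a/(a+b+c)) lies in the interior of S₃, is a fixed point of F, and is the unique fixed point of F in the interior of S₃. -/

import Mathlib

open Finset Filter Topology

/-- The simplex `S₃` of probability vectors over three grammars. -/
def simplex3 : Set (Fin 3 → ℝ) :=
  {p | (∀ i, 0 ≤ p i) ∧ ∑ i, p i = 1}

/-- The penalty probability `c_i(p) = ∑_{j ≠ i} a_{ij} p_j`. -/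
def penalty (A : Matrix (Fin 3) (Fin 3) ℝ) (p : Fin 3 → ℝ) (i : Fin 3) : ℝ :=
  ∑ j ∈ Finset.univ.filter (fun j => j ≠ i), A i j * p j

/-- The Variational Learning dynamics
`F_i(p) = ∏_{j ≠ i} c_j(p) / ∑_m ∏_{k ≠ m} c_k(p)`. -/
noncomputable def VLdyn (A : Matrix (Fin 3) (Fin 3) ℝ) (p : Fin 3 → ℝ) (i : Fin 3) : ℝ :=
  (∏ j ∈ Finset.univ.filter (fun j => j ≠ i), penalty A p j) /
    (∑ m, ∏ k ∈ Finset.univ.filter (fun k => k ≠ m), penalty A p k)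

/-- The vertex `v_i` of the simplex, i.e. the state of total dominance of grammar `G_i`. -/
def vertex (i : Fin 3) : Fin 3 → ℝ := fun j => if j = i then 1 else 0

lemma filt0 : (Finset.univ.filter (fun j => j ≠ (0:Fin 3))) = {1,2} := by decide
lemma filt1 : (Finset.univ.filter (fun j => j ≠ (1:Fin 3))) = {0,2} := by decide
lemma filt2 : (Finset.univ.filter (fun j => j ≠ (2:Fin 3))) = {0,1} := by decide

lemma pen0 (A : Matrix (Fin 3) (Fin 3) ℝ) (p : Fin 3 → ℝ) :
    penalty A p 0 = A 0 1 * p 1 + A 0 2 * p 2 := by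
  simp [penalty, filt0]
lemma pen1 (A : Matrix (Fin 3) (Fin 3) ℝ) (p : Fin 3 → ℝ) :
    penalty A p 1 = A 1 0 * p 0 + A 1 2 * p 2 := by
  simp [penalty, filt1]
lemma pen2 (A : Matrix (Fin 3) (Fin 3) ℝ) (p : Fin 3 → ℝ) :
    penalty A p 2 = A 2 0 * p 0 + A 2 1 * p 1 := by
  simp [penalty, filt2]

lemma vl (A : Matrix (Fin 3) (Fin 3) ℝ) (p : Fin 3 → ℝ) (i : Fin 3) :
    VLdyn A p i = (∏ j ∈ Finset.univ.filter (fun j => j ≠ i), penalty A p j) /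
      (penalty A p 1 * penalty A p 2 + penalty A p 0 * penalty A p 2 +
        penalty A p 0 * penalty A p 1) := by
  unfold VLdyn
  congr 1
  rw [Fin.sum_univ_three, filt0, filt1, filt2]
  simp [mul_comm]

lemma vl0 (A : Matrix (Fin 3) (Fin 3) ℝ) (p : Fin 3 → ℝ) :
    VLdyn A p 0 = (penalty A p 1 * penalty A p 2) /
      (penalty A p 1 * penalty A p 2 + penalty A p 0 * penalty A p 2 +
        penalty A p 0 * penalty A p 1) := by
  rw [vl, filt0, Finset.prod_pair (by decide)]

lemma vl1 (A : Matrix (Fin 3) (Fin 3) ℝ) (p : Fin 3 → ℝ) :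
    VLdyn A p 1 = (penalty A p 0 * penalty A p 2) /
      (penalty A p 1 * penalty A p 2 + penalty A p 0 * penalty A p 2 +
        penalty A p 0 * penalty A p 1) := by
  rw [vl, filt1, Finset.prod_pair (by decide)]

lemma vl2 (A : Matrix (Fin 3) (Fin 3) ℝ) (p : Fin 3 → ℝ) :
    VLdyn A p 2 = (penalty A p 0 * penalty A p 1) /
      (penalty A p 1 * penalty A p 2 + penalty A p 0 * penalty A p 2 +
        penalty A p 0 * penalty A p 1) := by
  rw [vl, filt2, Finset.prod_pair (by decide)]

theorem stmt_13 (a b c : ℝ) (ha : 0 < a) (hb : 0 < b) (hc : 0 < c)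
    (A : Matrix (Fin 3) (Fin 3) ℝ)
    (hA : A = !![0, a, b; a, 0, c; b, c, 0]) :
    (![c/(a+b+c), b/(a+b+c), a/(a+b+c)] : Fin 3 → ℝ) ∈ simplex3 ∧
    (∀ i, 0 < (![c/(a+b+c), b/(a+b+c), a/(a+b+c)] : Fin 3 → ℝ) i ∧
      (![c/(a+b+c), b/(a+b+c), a/(a+b+c)] : Fin 3 → ℝ) i < 1) ∧
    VLdyn A ![c/(a+b+c), b/(a+b+c), a/(a+b+c)] = ![c/(a+b+c), b/(a+b+c), a/(a+b+c)] ∧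
    (∀ q ∈ simplex3, (∀ i, 0 < q i ∧ q i < 1) → VLdyn A q = q →
      q = ![c/(a+b+c), b/(a+b+c), a/(a+b+c)]) := by
  subst hA
  have hs : 0 < a + b + c := by linarith
  have hs' : a + b + c ≠ 0 := ne_of_gt hs
  refine ⟨⟨?_, ?_⟩, ?_, ?_, ?_⟩
  · intro i
    fin_cases i
    · show (0:ℝ) ≤ c / (a+b+c); positivity
    · show (0:ℝ) ≤ b / (a+b+c); positivity
    · show (0:ℝ) ≤ a / (a+b+c); positivity
  · rw [Fin.sum_univ_three]
    show c/(a+b+c) + b/(a+b+c) + a/(a+b+c) = 1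
    field_simp
    ring
  · intro i
    fin_cases i
    · exact ⟨by show (0:ℝ) < c/(a+b+c); positivity,
        by show c/(a+b+c) < 1; rw [div_lt_one hs]; linarith⟩
    · exact ⟨by show (0:ℝ) < b/(a+b+c); positivity,
        by show b/(a+b+c) < 1; rw [div_lt_one hs]; linarith⟩
    · exact ⟨by show (0:ℝ) < a/(a+b+c); positivity,
        by show a/(a+b+c) < 1; rw [div_lt_one hs]; linarith⟩
  · -- fixed point
    set p : Fin 3 → ℝ := ![c/(a+b+c), b/(a+b+c), a/(a+b+c)] with hp
    have h0 : penalty !![0, a, b; a, 0, c; b, c, 0] p 0 = 2*a*b/(a+b+c) := by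
      rw [pen0]
      show a * (b/(a+b+c)) + b * (a/(a+b+c)) = _
      field_simp; ring
    have h1 : penalty !![0, a, b; a, 0, c; b, c, 0] p 1 = 2*a*c/(a+b+c) := by
      rw [pen1]
      show a * (c/(a+b+c)) + c * (a/(a+b+c)) = _
      field_simp; ring
    have h2 : penalty !![0, a, b; a, 0, c; b, c, 0] p 2 = 2*b*c/(a+b+c) := by
      rw [pen2]
      show b * (c/(a+b+c)) + c * (b/(a+b+c)) = _
      field_simp; ring
    funext i
    fin_cases i
    · show VLdyn _ p 0 = c/(a+b+c)
      rw [vl0, h0, h1, h2, div_eq_div_iff (by positivity) hs']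
      field_simp; ring
    · show VLdyn _ p 1 = b/(a+b+c)
      rw [vl1, h0, h1, h2, div_eq_div_iff (by positivity) hs']
      field_simp; ring
    · show VLdyn _ p 2 = a/(a+b+c)
      rw [vl2, h0, h1, h2, div_eq_div_iff (by positivity) hs']
      field_simp; ring
  · -- uniqueness
    intro q hq hqi hfix
    obtain ⟨-, hsum⟩ := hq
    rw [Fin.sum_univ_three] at hsum
    have q0 := (hqi 0).1
    have q1 := (hqi 1).1
    have q2 := (hqi 2).1
    have hc0 : penalty !![0, a, b; a, 0, c; b, c, 0] q 0 = a * q 1 + b * q 2 := by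
      rw [pen0]; norm_num [Matrix.cons_val_one, Matrix.head_cons, Matrix.cons_val_two, Matrix.tail_cons]
    have hc1 : penalty !![0, a, b; a, 0, c; b, c, 0] q 1 = a * q 0 + c * q 2 := by
      rw [pen1]; norm_num [Matrix.cons_val_one, Matrix.head_cons, Matrix.cons_val_two, Matrix.tail_cons]
    have hc2 : penalty !![0, a, b; a, 0, c; b, c, 0] q 2 = b * q 0 + c * q 1 := by
      rw [pen2]; norm_num [Matrix.cons_val_one, Matrix.head_cons, Matrix.cons_val_two, Matrix.tail_cons]
    have pc0 : 0 < a * q 1 + b * q 2 := by positivity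
    have pc1 : 0 < a * q 0 + c * q 2 := by positivity
    have pc2 : 0 < b * q 0 + c * q 1 := by positivity
    set D := (a * q 0 + c * q 2)*(b * q 0 + c * q 1)
        + (a * q 1 + b * q 2)*(b * q 0 + c * q 1)
        + (a * q 1 + b * q 2)*(a * q 0 + c * q 2) with hDdef
    have hD : 0 < D := by rw [hDdef]; positivity
    have e0 : q 0 * D = (a * q 0 + c * q 2) * (b * q 0 + c * q 1) := by
      have h := congrFun hfix 0
      rw [vl0, hc0, hc1, hc2] at h
      exact (eq_div_iff (ne_of_gt hD)).mp h.symm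
    have e1 : q 1 * D = (a * q 1 + b * q 2) * (b * q 0 + c * q 1) := by
      have h := congrFun hfix 1
      rw [vl1, hc0, hc1, hc2] at h
      exact (eq_div_iff (ne_of_gt hD)).mp h.symm
    have e2 : q 2 * D = (a * q 1 + b * q 2) * (a * q 0 + c * q 2) := by
      have h := congrFun hfix 2
      rw [vl2, hc0, hc1, hc2] at h
      exact (eq_div_iff (ne_of_gt hD)).mp h.symm
    have k01 : q 0 * (a * q 1 + b * q 2) = q 1 * (a * q 0 + c * q 2) := by
      apply mul_right_cancel₀ (ne_of_gt hD)
      calc q 0 * (a * q 1 + b * q 2) * D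
          = (a * q 1 + b * q 2) * (q 0 * D) := by ring
        _ = (a * q 1 + b * q 2) * ((a * q 0 + c * q 2) * (b * q 0 + c * q 1)) := by rw [e0]
        _ = (a * q 0 + c * q 2) * ((a * q 1 + b * q 2) * (b * q 0 + c * q 1)) := by ring
        _ = (a * q 0 + c * q 2) * (q 1 * D) := by rw [e1]
        _ = q 1 * (a * q 0 + c * q 2) * D := by ring
    have k02 : q 0 * (a * q 1 + b * q 2) = q 2 * (b * q 0 + c * q 1) := by
      apply mul_right_cancel₀ (ne_of_gt hD)
      calc q 0 * (a * q 1 + b * q 2) * D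
          = (a * q 1 + b * q 2) * (q 0 * D) := by ring
        _ = (a * q 1 + b * q 2) * ((a * q 0 + c * q 2) * (b * q 0 + c * q 1)) := by rw [e0]
        _ = (b * q 0 + c * q 1) * ((a * q 1 + b * q 2) * (a * q 0 + c * q 2)) := by ring
        _ = (b * q 0 + c * q 1) * (q 2 * D) := by rw [e2]
        _ = q 2 * (b * q 0 + c * q 1) * D := by ring
    have r1 : b * q 0 = c * q 1 := by
      have h : b * q 0 * q 2 = c * q 1 * q 2 := by linarith [k01]
      exact mul_right_cancel₀ (ne_of_gt q2) h
    have r2 : a * q 0 = c * q 2 := by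
      have h : a * q 0 * q 1 = c * q 2 * q 1 := by linarith [k02]
      exact mul_right_cancel₀ (ne_of_gt q1) h
    have hq0 : q 0 = c / (a+b+c) := by
      rw [eq_div_iff hs']
      have h : c * (q 0 + q 1 + q 2) = c * 1 := by rw [hsum]
      linarith [r1, r2, h]
    have hq1 : q 1 = b / (a+b+c) := by
      have h : q 1 = b * q 0 / c := by
        rw [eq_div_iff (ne_of_gt hc)]; linarith [r1]
      rw [h, hq0]
      field_simp
    have hq2 : q 2 = a / (a+b+c) := by
      have h : q 2 = a * q 0 / c := by
        rw [eq_div_iff (ne_of_gt hc)]; linarith [r2]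
      rw [h, hq0]
      field_simp
    funext i
    fin_cases i
    · exact hq0
    · exact hq1
    · exact hq2
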